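/- arXiv:0908.0070 — 4 statements merged into one kernel-verified Lean document; each statement's English description precedes it below -/
import Mathlib

section
/- Let A and B be unital C*-algebras, with e the unit of A, and let p ∈ (0, 1) and θ ∈ [0, ∞) be real numbers. Let f : A → B be a mapping with f(0) = 0 such that f(3^n·u·y + 3^n·y·u) = f(3^n·u)·f(y) + f(y)·f(3^n·u) for every unitary u ∈ U(A), every y ∈ A, and every natural number n. Suppose that ‖2 f((μx + μy)/2) − μ f(x) − μ f(y) + f(z*) − f(z)*‖ ≤ θ(‖x‖^p + ‖y‖^p + ‖z‖^p) for every complex number μ with |μ| = 1 and all x, y, z ∈ A. If the limit lim_{n→∞} 3^{-n} f(3^n e) exists and is a unitary element of B lying in the algebraic center Z(B), then f is a Jordan *-homomorphism. -/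
open Filter Topology

lemma aux_sa_unitary {A : Type*} [CStarAlgebra A] [Nontrivial A]
    (a : A) (ha : IsSelfAdjoint a) (hn : ‖a‖ ≤ 1) :
    ∃ u ∈ unitary A, a = (2⁻¹ : ℂ) • (u + star u) := by
  set b : A := cfc (fun t : ℝ => Real.sqrt (1 - t ^ 2)) a with hbdef
  have hb : IsSelfAdjoint b := cfc_predicate _ a
  have hcomm : a * b = b * a := by
    have := cfc_commute_cfc (id : ℝ → ℝ) (fun t : ℝ => Real.sqrt (1 - t ^ 2)) a
    rwa [cfc_id ℝ a ha] at this
  have hspec : ∀ t ∈ spectrum ℝ a, t ^ 2 ≤ 1 := by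
    intro t ht
    have h1 : ‖t‖ ≤ ‖a‖ := spectrum.norm_le_norm_of_mem ht
    have : |t| ≤ 1 := le_trans h1 hn
    nlinarith [abs_nonneg t, le_abs_self t, neg_abs_le t]
  have hsq : b ^ 2 = 1 - a ^ 2 := by
    rw [hbdef, ← cfc_pow (fun t : ℝ => Real.sqrt (1 - t ^ 2)) 2 a]
    have : cfc (fun t : ℝ => Real.sqrt (1 - t ^ 2) ^ 2) a
        = cfc (fun t : ℝ => 1 - t ^ 2) a := by
      apply cfc_congr
      intro t ht
      exact Real.sq_sqrt (by linarith [hspec t ht])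
    rw [this, cfc_sub (fun _ : ℝ => (1:ℝ)) (fun t : ℝ => t ^ 2) a, cfc_const_one ℝ a,
      cfc_pow_id (R := ℝ) a]
  have h2 : (Complex.I • b) * (Complex.I • b) = -(b * b) := by
    rw [smul_mul_assoc, mul_smul_comm, smul_smul, Complex.I_mul_I, neg_one_smul]
  have key1 : (a - Complex.I • b) * (a + Complex.I • b) = 1 := by
    calc (a - Complex.I • b) * (a + Complex.I • b)
        = a * a + Complex.I • (a * b) - Complex.I • (b * a)
            - (Complex.I • b) * (Complex.I • b) := by
          simp only [sub_mul, mul_add, mul_smul_comm, smul_mul_assoc]; module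
      _ = a * a + b * b := by rw [hcomm, h2]; abel
      _ = 1 := by rw [← sq, ← sq, hsq]; abel
  have key2 : (a + Complex.I • b) * (a - Complex.I • b) = 1 := by
    calc (a + Complex.I • b) * (a - Complex.I • b)
        = a * a - Complex.I • (a * b) + Complex.I • (b * a)
            - (Complex.I • b) * (Complex.I • b) := by
          simp only [sub_mul, mul_sub, add_mul, mul_add, mul_smul_comm, smul_mul_assoc]; module
      _ = a * a + b * b := by rw [hcomm, h2]; abel
      _ = 1 := by rw [← sq, ← sq, hsq]; abel
  refine ⟨a + Complex.I • b, ?_, ?_⟩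
  · rw [Unitary.mem_iff]
    have hstar : star (a + Complex.I • b) = a - Complex.I • b := by
      simp [star_smul, ha.star_eq, hb.star_eq, Complex.conj_I, sub_eq_add_neg, neg_smul]
    rw [hstar]
    exact ⟨key1, key2⟩
  · have hstar : star (a + Complex.I • b) = a - Complex.I • b := by
      simp [star_smul, ha.star_eq, hb.star_eq, Complex.conj_I, sub_eq_add_neg, neg_smul]
    rw [hstar]
    have : a + Complex.I • b + (a - Complex.I • b) = (2 : ℂ) • a := by
      module
    rw [this, smul_smul]
    norm_num

lemma aux_mem_span {A : Type*} [CStarAlgebra A] [Nontrivial A]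
    (M : Submodule ℂ A) (hM : ∀ u ∈ unitary A, u ∈ M) (x : A) : x ∈ M := by
  have hsa : ∀ a : A, IsSelfAdjoint a → a ∈ M := by
    intro a ha
    rcases eq_or_ne a 0 with rfl | hne
    · exact M.zero_mem
    · have hr : (0:ℝ) < ‖a‖ := norm_pos_iff.mpr hne
      set a' : A := ((‖a‖⁻¹ : ℝ) : ℂ) • a with ha'
      have ha'sa : IsSelfAdjoint a' := by
        rw [ha', IsSelfAdjoint, star_smul, ha.star_eq, Complex.star_def, Complex.conj_ofReal]
      have ha'n : ‖a'‖ ≤ 1 := by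
        rw [ha', norm_smul]
        simp [abs_of_nonneg (le_of_lt hr), inv_mul_cancel₀ (ne_of_gt hr)]
      obtain ⟨u, hu, heq⟩ := aux_sa_unitary a' ha'sa ha'n
      have hmem : a' ∈ M := by
        rw [heq]
        exact M.smul_mem _ (M.add_mem (hM u hu) (hM _ (Unitary.star_mem hu)))
      have : ((‖a‖ : ℝ) : ℂ) • a' = a := by
        rw [ha', smul_smul, ← Complex.ofReal_mul, mul_inv_cancel₀ (ne_of_gt hr)]
        simp
      rw [← this]
      exact M.smul_mem _ hmem
  have hIc : Complex.I * (-(2⁻¹) * Complex.I) = 2⁻¹ := by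
    rw [mul_comm, mul_assoc, Complex.I_mul_I]; ring
  have h1 : x = (2⁻¹ : ℂ) • (x + star x)
      + Complex.I • ((-(2⁻¹) * Complex.I : ℂ) • (x - star x)) := by
    rw [smul_smul, hIc]
    module
  rw [h1]
  refine M.add_mem (hsa _ ?_) (M.smul_mem _ (hsa _ ?_))
  · rw [IsSelfAdjoint, star_smul]
    simp [add_comm]
  · have hst : star (-(2⁻¹) * Complex.I : ℂ) = 2⁻¹ * Complex.I := by
      simp [Complex.ext_iff]
    rw [IsSelfAdjoint, star_smul, star_sub, star_star, hst]
    module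

/-- With `p ∈ (0,1)` and `θ ≥ 0`, if `f : A → B` satisfies `f 0 = 0`,
the Jordan-type multiplicativity condition on `3^n`-scaled unitaries, the approximate
Jensen inequality with control `θ(‖x‖^p + ‖y‖^p + ‖z‖^p)`, and `lim 3⁻ⁿ f(3ⁿ e)` exists
and is a unitary element of the center of `B`, then `f` is a Jordan *-homomorphism. -/
theorem stmt1
    {A B : Type*}
    [NormedRing A] [StarRing A] [CStarRing A] [CompleteSpace A]
    [NormedAlgebra ℂ A] [StarModule ℂ A]
    [NormedRing B] [StarRing B] [CStarRing B] [CompleteSpace B]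
    [NormedAlgebra ℂ B] [StarModule ℂ B]
    (p θ : ℝ) (hp : 0 < p) (hp1 : p < 1) (hθ : 0 ≤ θ)
    (f : A → B) (hf0 : f 0 = 0)
    (hmult : ∀ u ∈ unitary A, ∀ (y : A) (n : ℕ),
      f ((3 ^ n : ℕ) • (u * y) + (3 ^ n : ℕ) • (y * u))
        = f ((3 ^ n : ℕ) • u) * f y + f y * f ((3 ^ n : ℕ) • u))
    (hineq : ∀ μ : ℂ, ‖μ‖ = 1 → ∀ x y z : A,
      ‖(2 : ℂ) • f ((2⁻¹ : ℂ) • (μ • x + μ • y)) - μ • f x - μ • f y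
          + f (star z) - star (f z)‖ ≤ θ * (‖x‖ ^ p + ‖y‖ ^ p + ‖z‖ ^ p))
    (T : B) (hTU : T ∈ unitary B) (hTZ : T ∈ Set.center B)
    (hlim : Tendsto (fun n : ℕ => ((3 : ℂ) ^ n)⁻¹ • f ((3 ^ n : ℕ) • (1 : A)))
      atTop (𝓝 T)) :
    (∀ x y : A, f (x + y) = f x + f y) ∧
    (∀ (c : ℂ) (x : A), f (c • x) = c • f x) ∧
    (∀ x y : A, f (x * y + y * x) = f x * f y + f y * f x) ∧
    (∀ x : A, f (star x) = star (f x)) := by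
  rcases subsingleton_or_nontrivial A with hA | hA
  · have hz : ∀ x : A, x = 0 := fun x => Subsingleton.elim x 0
    refine ⟨fun x y => ?_, fun c x => ?_, fun x y => ?_, fun x => ?_⟩
    · rw [hz x, hz y]; simp [hf0]
    · rw [hz x]; simp [hf0]
    · rw [hz x, hz y]; simp [hf0]
    · rw [hz x]; simp [hf0]
  letI : CStarAlgebra A := {}
  -- basic numerology
  set rr : ℝ := (3 : ℝ) ^ p / 3 with hrrdef
  have hrr0 : 0 ≤ rr := by positivity
  have hrr1 : rr < 1 := by
    rw [hrrdef, div_lt_one (by norm_num : (0:ℝ) < 3)]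
    calc (3 : ℝ) ^ p < (3 : ℝ) ^ (1 : ℝ) :=
          Real.rpow_lt_rpow_of_exponent_lt (by norm_num) hp1
      _ = 3 := Real.rpow_one 3
  have hpow : ∀ n : ℕ, ((3 : ℝ) ^ n : ℝ) ^ p = ((3 : ℝ) ^ p) ^ n := by
    intro n
    rw [← Real.rpow_natCast (3 : ℝ) n, ← Real.rpow_natCast ((3:ℝ) ^ p) n,
      ← Real.rpow_mul (by norm_num), ← Real.rpow_mul (by norm_num), mul_comm]
  have hfac1 : ∀ (n : ℕ) (t : ℝ), 0 ≤ t →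
      ((3 : ℝ) ^ n)⁻¹ * ((3:ℝ) ^ n * t) ^ p = t ^ p * rr ^ n := by
    intro n t ht
    rw [Real.mul_rpow (by positivity) ht, hpow n, hrrdef, div_pow]
    have h3 : ((3:ℝ) ^ n) ≠ 0 := by positivity
    field_simp
  -- the approximating sequence
  set g : ℕ → A → B := fun n x => ((3 : ℂ) ^ n)⁻¹ • f ((3 ^ n : ℕ) • x) with hgdef
  have hsmul : ∀ (n : ℕ) (x : A), ((3 ^ n : ℕ) • x) = ((3 : ℂ) ^ n) • x := by
    intro n x
    rw [← Nat.cast_smul_eq_nsmul ℂ]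
    norm_num
  have hnorm3n : ∀ (n : ℕ) (x : A), ‖(3 ^ n : ℕ) • x‖ = (3:ℝ) ^ n * ‖x‖ := by
    intro n x
    rw [hsmul, norm_smul]
    norm_num
  have hgnorm : ∀ (n : ℕ) (v : B), ‖((3 : ℂ) ^ n)⁻¹ • v‖ = ((3:ℝ) ^ n)⁻¹ * ‖v‖ := by
    intro n v
    rw [norm_smul]
    norm_num
  -- specializations of the functional inequality
  have hJ : ∀ x y : A, ‖(2:ℂ) • f ((2⁻¹:ℂ) • (x + y)) - f x - f y‖
      ≤ θ * (‖x‖ ^ p + ‖y‖ ^ p) := by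
    intro x y
    have := hineq 1 (by norm_num) x y 0
    simp only [one_smul, star_zero, hf0, sub_zero, add_zero, norm_zero,
      Real.zero_rpow hp.ne'] at this
    exact this
  have hstarpt : ∀ z : A, ‖f (star z) - star (f z)‖ ≤ θ * ‖z‖ ^ p := by
    intro z
    have := hineq 1 (by norm_num) 0 0 z
    simp only [one_smul, add_zero, smul_zero, hf0, sub_zero, norm_zero,
      Real.zero_rpow hp.ne', zero_add] at this
    exact this
  have hmu : ∀ μ : ℂ, ‖μ‖ = 1 → ∀ x : A, ‖f (μ • x) - μ • f x‖ ≤ θ * ‖x‖ ^ p := by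
    intro μ hμ x
    have h1 := hineq μ hμ x x 0
    have e1 : (2⁻¹ : ℂ) • (μ • x + μ • x) = μ • x := by module
    have e2 : (2:ℂ) • f (μ • x) - μ • f x - μ • f x = (2:ℂ) • (f (μ • x) - μ • f x) := by
      module
    rw [e1, star_zero, hf0, star_zero, sub_zero, add_zero, e2, norm_smul] at h1
    simp only [norm_zero, Real.zero_rpow hp.ne', add_zero] at h1
    have : ‖(2:ℂ)‖ = 2 := by norm_num
    rw [this] at h1
    linarith
  -- the key 3x estimate
  set C : ℝ := θ * ((3:ℝ) ^ p + 3) with hCdef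
  have hthree : ∀ x : A, ‖f ((3:ℂ) • x) - (3:ℂ) • f x‖ ≤ C * ‖x‖ ^ p := by
    intro x
    have a1 := hJ ((3:ℂ) • x) (-x)
    have e1 : (2⁻¹ : ℂ) • ((3:ℂ) • x + -x) = x := by module
    rw [e1] at a1
    have a2 := hJ x (-x)
    have e2 : (2⁻¹ : ℂ) • (x + -x) = 0 := by module
    rw [e2, hf0, smul_zero] at a2
    have e3 : f ((3:ℂ) • x) - (3:ℂ) • f x
        = -((2:ℂ) • f x - f ((3:ℂ) • x) - f (-x)) + ((0:B) - f x - f (-x)) := by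
      module
    have hn3 : ‖(3:ℂ) • x‖ = 3 * ‖x‖ := by rw [norm_smul]; norm_num
    have hrp : ‖(3:ℂ) • x‖ ^ p = (3:ℝ) ^ p * ‖x‖ ^ p := by
      rw [hn3, Real.mul_rpow (by norm_num) (norm_nonneg x)]
    calc ‖f ((3:ℂ) • x) - (3:ℂ) • f x‖
        ≤ ‖(2:ℂ) • f x - f ((3:ℂ) • x) - f (-x)‖ + ‖(0:B) - f x - f (-x)‖ := by
          rw [e3]; exact (norm_add_le _ _).trans (by rw [norm_neg])
      _ ≤ θ * (‖(3:ℂ) • x‖ ^ p + ‖-x‖ ^ p) + θ * (‖x‖ ^ p + ‖-x‖ ^ p) := add_le_add a1 a2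
      _ = C * ‖x‖ ^ p := by rw [hrp, norm_neg, hCdef]; ring
  have hC0 : 0 ≤ C := by
    have : (0:ℝ) ≤ (3:ℝ) ^ p := by positivity
    rw [hCdef]; nlinarith
  -- Cauchy and the limit function
  have hcau : ∀ x : A, CauchySeq (fun n => g n x) := by
    intro x
    apply cauchySeq_of_le_geometric rr (C * ‖x‖ ^ p / 3) hrr1
    intro n
    rw [dist_eq_norm]
    have e1 : g n x - g (n+1) x
        = ((3:ℂ) ^ (n+1))⁻¹ • ((3:ℂ) • f ((3 ^ n : ℕ) • x) - f ((3 ^ (n+1) : ℕ) • x)) := by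
      rw [hgdef]
      simp only [smul_sub, smul_smul]
      congr 2
      rw [pow_succ]
      field_simp
    have e2 : ((3 ^ (n+1) : ℕ) • x) = (3:ℂ) • ((3 ^ n : ℕ) • x) := by
      rw [hsmul, hsmul, smul_smul, ← pow_succ']
    calc ‖g n x - g (n+1) x‖
        = ((3:ℝ) ^ (n+1))⁻¹ * ‖(3:ℂ) • f ((3 ^ n : ℕ) • x) - f ((3 ^ (n+1) : ℕ) • x)‖ := by
          rw [e1, hgnorm]
      _ ≤ ((3:ℝ) ^ (n+1))⁻¹ * (C * ‖(3 ^ n : ℕ) • x‖ ^ p) := by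
          apply mul_le_mul_of_nonneg_left _ (by positivity)
          rw [e2, ← norm_neg]
          simpa [neg_sub] using hthree ((3 ^ n : ℕ) • x)
      _ = C * ‖x‖ ^ p / 3 * rr ^ n := by
          rw [hnorm3n]
          have h1 := hfac1 n ‖x‖ (norm_nonneg x)
          have h3n : ((3:ℝ) ^ n) ≠ 0 := by positivity
          calc ((3:ℝ) ^ (n+1))⁻¹ * (C * ((3:ℝ) ^ n * ‖x‖) ^ p)
              = C / 3 * (((3:ℝ) ^ n)⁻¹ * ((3:ℝ) ^ n * ‖x‖) ^ p) := by
                rw [pow_succ, mul_inv]; ring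
            _ = C * ‖x‖ ^ p / 3 * rr ^ n := by rw [h1]; ring
  have hex : ∀ x : A, ∃ L, Tendsto (fun n => g n x) atTop (𝓝 L) :=
    fun x => cauchySeq_tendsto_of_complete (hcau x)
  choose h hh using hex
  -- limit-transfer principle
  have keyz : ∀ (Z : ℕ → B) (L : B) (K : ℝ),
      (∀ n, ‖Z n‖ ≤ K * rr ^ n) → Tendsto Z atTop (𝓝 L) → L = 0 := by
    intro Z L K hb hZ
    refine tendsto_nhds_unique hZ (squeeze_zero_norm hb ?_)
    have := (tendsto_pow_atTop_nhds_zero_of_lt_one hrr0 hrr1).const_mul K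
    simpa using this
  -- h at 0
  have H0 : h 0 = 0 := by
    refine tendsto_nhds_unique (hh 0) ?_
    have Hg0 : ∀ n : ℕ, g n 0 = 0 := by
      intro n; simp only [hgdef]; simp [hf0]
    simp only [Hg0]
    exact tendsto_const_nhds
  -- Jensen identity for h
  have HJ2 : ∀ x y : A, (2:ℂ) • h ((2⁻¹:ℂ) • (x + y)) = h x + h y := by
    intro x y
    set m : A := (2⁻¹:ℂ) • (x + y) with hmdef
    have hb : ∀ n : ℕ, ‖(2:ℂ) • g n m - g n x - g n y‖
        ≤ θ * (‖x‖ ^ p + ‖y‖ ^ p) * rr ^ n := by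
      intro n
      have e1 : (2:ℂ) • g n m - g n x - g n y
          = ((3:ℂ) ^ n)⁻¹ • ((2:ℂ) • f ((3 ^ n : ℕ) • m)
              - f ((3 ^ n : ℕ) • x) - f ((3 ^ n : ℕ) • y)) := by
        simp only [hgdef, smul_sub, smul_smul]
        rw [mul_comm]
      have e2 : ((3 ^ n : ℕ) • m) = (2⁻¹:ℂ) • ((3 ^ n : ℕ) • x + (3 ^ n : ℕ) • y) := by
        rw [hmdef, hsmul, hsmul, hsmul]
        module
      rw [e1, e2, hgnorm]
      calc ((3:ℝ) ^ n)⁻¹ * ‖(2:ℂ) • f ((2⁻¹:ℂ) • ((3 ^ n : ℕ) • x + (3 ^ n : ℕ) • y))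
              - f ((3 ^ n : ℕ) • x) - f ((3 ^ n : ℕ) • y)‖
          ≤ ((3:ℝ) ^ n)⁻¹ * (θ * (‖(3 ^ n : ℕ) • x‖ ^ p + ‖(3 ^ n : ℕ) • y‖ ^ p)) :=
            mul_le_mul_of_nonneg_left (hJ _ _) (by positivity)
        _ = θ * (‖x‖ ^ p + ‖y‖ ^ p) * rr ^ n := by
            rw [hnorm3n, hnorm3n]
            linear_combination θ * hfac1 n ‖x‖ (norm_nonneg x)
              + θ * hfac1 n ‖y‖ (norm_nonneg y)
    have hZ : Tendsto (fun n => (2:ℂ) • g n m - g n x - g n y) atTop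
        (𝓝 ((2:ℂ) • h m - h x - h y)) :=
      (((hh m).const_smul (2:ℂ)).sub (hh x)).sub (hh y)
    have h0 := keyz _ _ _ hb hZ
    rw [sub_sub, sub_eq_zero] at h0
    exact h0
  -- additivity
  have Hadd : ∀ x y : A, h (x + y) = h x + h y := by
    intro x y
    have h1 := HJ2 (x + y) 0
    rw [add_zero, H0, add_zero] at h1
    have h2 := HJ2 x y
    rw [h1] at h2
    exact h2
  -- modulus-one homogeneity
  have Hmu2 : ∀ μ : ℂ, ‖μ‖ = 1 → ∀ x : A, h (μ • x) = μ • h x := by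
    intro μ hμn x
    have hb : ∀ n : ℕ, ‖g n (μ • x) - μ • g n x‖ ≤ θ * ‖x‖ ^ p * rr ^ n := by
      intro n
      have e1 : g n (μ • x) - μ • g n x
          = ((3:ℂ) ^ n)⁻¹ • (f ((3 ^ n : ℕ) • (μ • x)) - μ • f ((3 ^ n : ℕ) • x)) := by
        simp only [hgdef, smul_sub, smul_smul]
        rw [mul_comm]
      have e2 : ((3 ^ n : ℕ) • (μ • x)) = μ • ((3 ^ n : ℕ) • x) := smul_comm _ _ _
      rw [e1, e2, hgnorm]
      calc ((3:ℝ) ^ n)⁻¹ * ‖f (μ • (3 ^ n : ℕ) • x) - μ • f ((3 ^ n : ℕ) • x)‖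
          ≤ ((3:ℝ) ^ n)⁻¹ * (θ * ‖(3 ^ n : ℕ) • x‖ ^ p) :=
            mul_le_mul_of_nonneg_left (hmu μ hμn _) (by positivity)
        _ = θ * ‖x‖ ^ p * rr ^ n := by
            rw [hnorm3n]
            linear_combination θ * hfac1 n ‖x‖ (norm_nonneg x)
    have hZ : Tendsto (fun n => g n (μ • x) - μ • g n x) atTop
        (𝓝 (h (μ • x) - μ • h x)) := (hh _).sub ((hh x).const_smul μ)
    exact sub_eq_zero.mp (keyz _ _ _ hb hZ)
  -- star preservation
  have Hstar2 : ∀ x : A, h (star x) = star (h x) := by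
    intro x
    have hb : ∀ n : ℕ, ‖g n (star x) - star (g n x)‖ ≤ θ * ‖x‖ ^ p * rr ^ n := by
      intro n
      have e2 : (3 ^ n : ℕ) • star x = star ((3 ^ n : ℕ) • x) := by
        rw [hsmul, hsmul, star_smul]
        congr 1
        simp
      have hc : star (((3:ℂ) ^ n)⁻¹) = ((3:ℂ) ^ n)⁻¹ := by simp
      have e3 : g n (star x) - star (g n x)
          = ((3:ℂ) ^ n)⁻¹ • (f (star ((3 ^ n : ℕ) • x)) - star (f ((3 ^ n : ℕ) • x))) := by
        simp only [hgdef]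
        rw [star_smul, hc, smul_sub, ← e2]
      rw [e3, hgnorm]
      calc ((3:ℝ) ^ n)⁻¹ * ‖f (star ((3 ^ n : ℕ) • x)) - star (f ((3 ^ n : ℕ) • x))‖
          ≤ ((3:ℝ) ^ n)⁻¹ * (θ * ‖(3 ^ n : ℕ) • x‖ ^ p) :=
            mul_le_mul_of_nonneg_left (hstarpt _) (by positivity)
        _ = θ * ‖x‖ ^ p * rr ^ n := by
            rw [hnorm3n]
            linear_combination θ * hfac1 n ‖x‖ (norm_nonneg x)
    have hZ : Tendsto (fun n => g n (star x) - star (g n x)) atTop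
        (𝓝 (h (star x) - star (h x))) :=
      (hh _).sub ((continuous_star.tendsto (h x)).comp (hh x))
    exact sub_eq_zero.mp (keyz _ _ _ hb hZ)
  -- h 1 = T
  have H1 : h 1 = T := by
    refine tendsto_nhds_unique (hh 1) ?_
    simp only [hgdef]
    exact hlim
  -- multiplicativity on unitaries
  have Hmul2 : ∀ u ∈ unitary A, ∀ y : A,
      h (u * y + y * u) = h u * f y + f y * h u := by
    intro u hu y
    have e : ∀ n : ℕ, g n (u * y + y * u) = g n u * f y + f y * g n u := by
      intro n
      simp only [hgdef]
      rw [smul_add, hmult u hu y n, smul_add, smul_mul_assoc, mul_smul_comm]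
    refine tendsto_nhds_unique (hh _) ?_
    simp only [e]
    exact ((hh u).mul tendsto_const_nhds).add (tendsto_const_nhds.mul (hh u))
  -- natural number scaling
  have Hnat : ∀ (n : ℕ) (x : A), h (n • x) = n • h x := by
    intro n x
    induction n with
    | zero => simpa using H0
    | succ k ih => rw [succ_nsmul, succ_nsmul, Hadd, ih]
  -- real homogeneity (small case)
  have Hr1 : ∀ r : ℝ, |r| ≤ 1 → ∀ x : A,
      h (((2*r : ℝ) : ℂ) • x) = ((2*r : ℝ) : ℂ) • h x := by
    intro r hr x
    have habs : -1 ≤ r ∧ r ≤ 1 := abs_le.mp hr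
    have hr2 : (0:ℝ) ≤ 1 - r ^ 2 := by nlinarith [habs.1, habs.2]
    set μ : ℂ := (r : ℂ) + (Real.sqrt (1 - r ^ 2) : ℂ) * Complex.I with hμdef
    have hre : μ.re = r := by simp [hμdef]
    have hμn : ‖μ‖ = 1 := by
      have h2 : ‖μ‖ ^ 2 = 1 := by
        rw [Complex.sq_norm, Complex.normSq_apply, hre]
        have him : μ.im = Real.sqrt (1 - r ^ 2) := by simp [hμdef]
        rw [him, Real.mul_self_sqrt hr2]
        ring
      nlinarith [norm_nonneg μ, h2]
    have hsum : μ + star μ = ((2*r : ℝ) : ℂ) := by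
      rw [Complex.star_def, Complex.add_conj, hre]
    have hstarn : ‖star μ‖ = 1 := by rw [norm_star]; exact hμn
    calc h (((2*r:ℝ):ℂ) • x) = h (μ • x + star μ • x) := by rw [← hsum, add_smul]
      _ = μ • h x + star μ • h x := by
          rw [Hadd, Hmu2 μ hμn, Hmu2 (star μ) hstarn]
      _ = ((2*r:ℝ):ℂ) • h x := by rw [← add_smul, hsum]
  have Hr2 : ∀ r : ℝ, |r| ≤ 2 → ∀ x : A, h ((r : ℂ) • x) = (r : ℂ) • h x := by
    intro r hr x
    have h1 : |r / 2| ≤ 1 := by rw [abs_div, abs_two]; linarith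
    have := Hr1 (r/2) h1 x
    rw [show (2*(r/2) : ℝ) = r by ring] at this
    exact this
  -- full real homogeneity
  have Hreal : ∀ (r : ℝ) (x : A), h ((r : ℂ) • x) = (r : ℂ) • h x := by
    intro r x
    set n : ℕ := ⌈|r|⌉₊ + 1 with hn
    have hn0 : (0:ℝ) < (n:ℝ) := by positivity
    have hrn : |r / (n:ℝ)| ≤ 2 := by
      have h1 : |r| ≤ (n:ℝ) := le_trans (Nat.le_ceil _) (by push_cast [hn]; linarith)
      rw [abs_div, abs_of_pos hn0, div_le_iff₀ hn0]
      nlinarith [abs_nonneg r]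
    have hne : ((⌈|r|⌉₊ : ℂ) + 1) ≠ 0 := by
      exact_mod_cast (show ((⌈|r|⌉₊ : ℝ) + 1) ≠ 0 by positivity)
    have e1 : (r : ℂ) • x = (n : ℕ) • (((r / (n:ℝ) : ℝ) : ℂ) • x) := by
      rw [← Nat.cast_smul_eq_nsmul ℂ, smul_smul]
      congr 1
      push_cast
      rw [mul_div_cancel₀ _ (Nat.cast_ne_zero.mpr (by omega) : (n:ℂ) ≠ 0)]
    rw [e1, Hnat, Hr2 _ hrn, ← Nat.cast_smul_eq_nsmul ℂ, smul_smul]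
    congr 1
    push_cast
    rw [mul_div_cancel₀ _ (Nat.cast_ne_zero.mpr (by omega) : (n:ℂ) ≠ 0)]
  -- complex homogeneity
  have HC : ∀ (c : ℂ) (x : A), h (c • x) = c • h x := by
    intro c x
    have hI : ‖Complex.I‖ = 1 := by simp
    have e1 : c • x = (c.re : ℂ) • x + (c.im : ℂ) • (Complex.I • x) := by
      rw [smul_smul, ← add_smul, Complex.re_add_im]
    rw [e1, Hadd, Hreal, Hreal, Hmu2 _ hI x, smul_smul, ← add_smul, Complex.re_add_im]
  -- relation between f and h
  have hTcomm : ∀ b : B, T * b = b * T := fun b => (Set.mem_center_iff.mp hTZ).comm b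
  have HT : ∀ y : A, h y = T * f y := by
    intro y
    have h1 := Hmul2 1 (one_mem (unitary A)) y
    rw [one_mul, mul_one, Hadd, H1, ← hTcomm (f y)] at h1
    have h2 : (2:ℂ) • h y = (2:ℂ) • (T * f y) := by
      rw [two_smul, two_smul]; exact h1
    exact smul_right_injective B (two_ne_zero) h2
  have hTst : star T = T := by
    have := Hstar2 1
    rw [star_one, H1] at this
    exact this.symm
  have hTT : T * T = 1 := by
    nth_rewrite 1 [← hTst]
    exact (Unitary.mem_iff.mp hTU).1
  have HfT : ∀ y : A, f y = T * h y := by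
    intro y
    rw [HT, ← mul_assoc, hTT, one_mul]
  -- Jordan identity for h
  have HJordan : ∀ x y : A, h (x * y + y * x) = h x * f y + f y * h x := by
    intro x y
    let M : Submodule ℂ A :=
      { carrier := {x | h (x * y + y * x) = h x * f y + f y * h x}
        zero_mem' := by simp [H0]
        add_mem' := by
          intro a b hamem hbmem
          simp only [Set.mem_setOf_eq] at *
          have e1 : (a + b) * y + y * (a + b) = (a*y + y*a) + (b*y + y*b) := by
            rw [add_mul, mul_add]; abel
          rw [e1, Hadd, hamem, hbmem, Hadd, add_mul, mul_add]
          abel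
        smul_mem' := by
          intro c a hamem
          simp only [Set.mem_setOf_eq] at *
          have e1 : (c • a) * y + y * (c • a) = c • (a * y + y * a) := by
            rw [smul_mul_assoc, mul_smul_comm, smul_add]
          rw [e1, HC, hamem, HC, smul_add, smul_mul_assoc, mul_smul_comm] }
    exact aux_mem_span M (fun u hu => Hmul2 u hu y) x
  -- final assembly
  refine ⟨?_, ?_, ?_, ?_⟩
  · intro x y
    rw [HfT (x+y), HfT x, HfT y, Hadd, mul_add]
  · intro c x
    rw [HfT (c • x), HfT x, HC, mul_smul_comm]
  · intro x y
    rw [HfT (x*y + y*x), HJordan, mul_add, HfT x]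
    have e : f y * (T * h x) = T * (f y * h x) := by
      rw [← mul_assoc, ← hTcomm, mul_assoc]
    rw [e, ← mul_assoc]
  · intro x
    rw [HfT (star x), Hstar2, HfT x, star_mul, hTst, hTcomm]
end

section
/- Let A and B be unital C*-algebras, with e the unit of A, and assume A has real rank zero, i.e. the set of invertible self-adjoint elements of A is dense in the set of self-adjoint elements of A. Let p ∈ (0, 1) and θ ∈ [0, ∞) be real numbers. Let f : A → B be a continuous mapping with f(0) = 0 such that f(3^n·u·y + 3^n·y·u) = f(3^n·u)·f(y) + f(y)·f(3^n·u) for every u ∈ I₁(A_sa), every y ∈ A, and every natural number n. Suppose that ‖2 f((μx + μy)/2) − μ f(x) − μ f(y) + f(z*) − f(z)*‖ ≤ θ(‖x‖^p + ‖y‖^p + ‖z‖^p) for every complex number μ with |μ| = 1 and all x, y, z ∈ A. If the limit lim_{n→∞} 3^{-n} f(3^n e) exists and is a unitary element of B lying in the algebraic center Z(B), then f is a Jordan *-homomorphism. -/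
open Filter Topology

lemma aux_tendsto_zero_of_geom {B : Type*} [SeminormedAddCommGroup B] (b : ℕ → B) (C r : ℝ)
    (hr0 : 0 ≤ r) (hr1 : r < 1) (h : ∀ n, ‖b n‖ ≤ C * r ^ n) :
    Filter.Tendsto b Filter.atTop (𝓝 0) :=
  squeeze_zero_norm h
    (by simpa using (tendsto_pow_atTop_nhds_zero_of_lt_one hr0 hr1).const_mul C)

lemma aux_complex_smul_decomp {M : Type*} [AddCommGroup M] [Module ℂ M] (cc : ℂ) (m : M) :
    cc • m = (cc.re : ℂ) • m + (cc.im : ℂ) • (Complex.I • m) := by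
  rw [smul_smul, ← add_smul, Complex.re_add_im]

/-- Let `A` be a unital C*-algebra of real rank zero, `p ∈ (0,1)`,
`θ ≥ 0`. If the continuous map `f : A → B` satisfies `f 0 = 0`, the Jordan-type
multiplicativity condition on `3^n`-scaled elements of `I₁(A_sa)`, the approximate
Jensen inequality with control `θ(‖x‖^p + ‖y‖^p + ‖z‖^p)`, and `lim 3⁻ⁿ f(3ⁿ e)`
exists and is a unitary element of the center of `B`, then `f` is a Jordan
*-homomorphism. -/
theorem stmt3
    {A B : Type*}
    [NormedRing A] [StarRing A] [CStarRing A] [CompleteSpace A]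
    [NormedAlgebra ℂ A] [StarModule ℂ A]
    [NormedRing B] [StarRing B] [CStarRing B] [CompleteSpace B]
    [NormedAlgebra ℂ B] [StarModule ℂ B]
    (hrr0 : {x : A | IsSelfAdjoint x} ⊆
      closure {x : A | IsSelfAdjoint x ∧ IsUnit x})
    (p θ : ℝ) (hp : 0 < p) (hp1 : p < 1) (hθ : 0 ≤ θ)
    (f : A → B) (hfc : Continuous f) (hf0 : f 0 = 0)
    (hmult : ∀ u : A, IsSelfAdjoint u → ‖u‖ = 1 → IsUnit u → ∀ (y : A) (n : ℕ),
      f ((3 ^ n : ℕ) • (u * y) + (3 ^ n : ℕ) • (y * u))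
        = f ((3 ^ n : ℕ) • u) * f y + f y * f ((3 ^ n : ℕ) • u))
    (hineq : ∀ μ : ℂ, ‖μ‖ = 1 → ∀ x y z : A,
      ‖(2 : ℂ) • f ((2⁻¹ : ℂ) • (μ • x + μ • y)) - μ • f x - μ • f y
          + f (star z) - star (f z)‖ ≤ θ * (‖x‖ ^ p + ‖y‖ ^ p + ‖z‖ ^ p))
    (T : B) (hTU : T ∈ unitary B) (hTZ : T ∈ Set.center B)
    (hlim : Tendsto (fun n : ℕ => ((3 : ℂ) ^ n)⁻¹ • f ((3 ^ n : ℕ) • (1 : A)))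
      atTop (𝓝 T)) :
    (∀ x y : A, f (x + y) = f x + f y) ∧
    (∀ (c : ℂ) (x : A), f (c • x) = c • f x) ∧
    (∀ x y : A, f (x * y + y * x) = f x * f y + f y * f x) ∧
    (∀ x : A, f (star x) = star (f x)) := by
  obtain hA | hA := subsingleton_or_nontrivial A
  · have hz : ∀ x : A, f x = 0 := fun x => by rw [Subsingleton.elim x 0, hf0]
    exact ⟨fun x y => by simp [hz], fun c x => by simp [hz], fun x y => by simp [hz],
      fun x => by simp [hz]⟩
  -- nontrivial case
  -- convert ℕ-smul to ℂ-smul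
  have h3smul : ∀ (n : ℕ) (x : A), (3 ^ n : ℕ) • x = ((3 : ℂ) ^ n) • x := by
    intro n x
    rw [← Nat.cast_smul_eq_nsmul ℂ]
    congr 1
    push_cast
    ring
  set G : A → ℕ → B := fun x n => ((3 : ℂ) ^ n)⁻¹ • f (((3 : ℂ) ^ n) • x) with hG
  have hg1 : Tendsto (G 1) atTop (𝓝 T) := by
    simp only [hG]
    simpa only [h3smul] using hlim
  have hmult' : ∀ u : A, IsSelfAdjoint u → ‖u‖ = 1 → IsUnit u → ∀ (y : A) (n : ℕ),
      f (((3 : ℂ) ^ n) • (u * y + y * u))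
        = f (((3 : ℂ) ^ n) • u) * f y + f y * f (((3 : ℂ) ^ n) • u) := by
    intro u h1 h2 h3 y n
    have h := hmult u h1 h2 h3 y n
    rw [← smul_add] at h
    simpa only [h3smul] using h
  have hhalfadd : ∀ x : A, (2⁻¹ : ℂ) • x + (2⁻¹ : ℂ) • x = x := by
    intro x
    rw [← add_smul]
    norm_num
  have hkey : ∀ (x : A) (n : ℕ),
      f (((3 : ℂ) ^ n) • x)
        = f (((3 : ℂ) ^ n) • (1 : A)) * f ((2⁻¹ : ℂ) • x)
          + f ((2⁻¹ : ℂ) • x) * f (((3 : ℂ) ^ n) • (1 : A)) := by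
    intro x n
    have h := hmult' 1 (by simp : IsSelfAdjoint (1:A)) norm_one isUnit_one ((2⁻¹ : ℂ) • x) n
    rwa [one_mul, mul_one, hhalfadd x] at h
  set L : A → B := fun x => T * f ((2⁻¹ : ℂ) • x) + f ((2⁻¹ : ℂ) • x) * T with hL
  have hgL : ∀ x : A, Tendsto (G x) atTop (𝓝 (L x)) := by
    intro x
    have he : G x = fun n => (G 1 n) * f ((2⁻¹ : ℂ) • x)
        + f ((2⁻¹ : ℂ) • x) * (G 1 n) := by
      funext n
      simp only [hG]
      rw [hkey x n, smul_add, smul_mul_assoc, mul_smul_comm]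
    rw [he, hL]
    exact (hg1.mul_const _).add (hg1.const_mul _)
  -- geometric bound ingredients
  have hr0 : (0:ℝ) ≤ (3:ℝ) ^ p / 3 := by positivity
  have hr1 : (3:ℝ) ^ p / 3 < 1 := by
    rw [div_lt_one (by norm_num : (0:ℝ) < 3)]
    calc (3:ℝ) ^ p < (3:ℝ) ^ (1:ℝ) :=
          Real.rpow_lt_rpow_of_exponent_lt (by norm_num) hp1
      _ = 3 := Real.rpow_one 3
  have hnorminv : ∀ n : ℕ, ‖((3 : ℂ) ^ n)⁻¹‖ = ((3:ℝ) ^ n)⁻¹ := by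
    intro n
    rw [norm_inv, norm_pow]
    norm_num
  have h3p : ∀ (n : ℕ) (x : A), ‖((3 : ℂ) ^ n) • x‖ ^ p = ((3:ℝ) ^ p) ^ n * ‖x‖ ^ p := by
    intro n x
    rw [norm_smul, norm_pow]
    have h3 : ‖(3:ℂ)‖ = 3 := by norm_num
    rw [h3, Real.mul_rpow (by positivity) (norm_nonneg _)]
    congr 1
    rw [← Real.rpow_natCast (3:ℝ) n, ← Real.rpow_natCast ((3:ℝ) ^ p) n,
      ← Real.rpow_mul (by norm_num), ← Real.rpow_mul (by norm_num), mul_comm p (n:ℝ)]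
  -- the vanishing sequence
  have hzero : ∀ μ : ℂ, ‖μ‖ = 1 → ∀ x y z : A,
      Tendsto (fun n => (2 : ℂ) • G ((2⁻¹ : ℂ) • (μ • x + μ • y)) n - μ • G x n - μ • G y n
        + G (star z) n - star (G z n)) atTop (𝓝 0) := by
    intro μ hμ x y z
    apply aux_tendsto_zero_of_geom _ (θ * (‖x‖ ^ p + ‖y‖ ^ p + ‖z‖ ^ p)) ((3:ℝ) ^ p / 3) hr0 hr1
    intro n
    have hw' : ((3 : ℂ) ^ n) • ((2⁻¹ : ℂ) • (μ • x + μ • y))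
        = (2⁻¹ : ℂ) • (μ • (((3 : ℂ) ^ n) • x) + μ • (((3 : ℂ) ^ n) • y)) := by
      module
    have hsz : star (((3 : ℂ) ^ n) • z) = ((3 : ℂ) ^ n) • star z := by
      rw [star_smul]
      congr 1
      simp
    have hstarinv : star (((3 : ℂ) ^ n)⁻¹) = ((3 : ℂ) ^ n)⁻¹ := by
      simp
    have hterm : (2 : ℂ) • G ((2⁻¹ : ℂ) • (μ • x + μ • y)) n - μ • G x n - μ • G y n
          + G (star z) n - star (G z n)
        = ((3 : ℂ) ^ n)⁻¹ •
          ((2 : ℂ) • f ((2⁻¹ : ℂ) • (μ • (((3 : ℂ) ^ n) • x) + μ • (((3 : ℂ) ^ n) • y)))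
            - μ • f (((3 : ℂ) ^ n) • x) - μ • f (((3 : ℂ) ^ n) • y)
            + f (star (((3 : ℂ) ^ n) • z)) - star (f (((3 : ℂ) ^ n) • z))) := by
      simp only [hG]
      rw [hw', hsz, star_smul, hstarinv]
      module
    rw [hterm, norm_smul, hnorminv]
    have hb := hineq μ hμ (((3 : ℂ) ^ n) • x) (((3 : ℂ) ^ n) • y) (((3 : ℂ) ^ n) • z)
    calc ((3:ℝ) ^ n)⁻¹ * ‖(2 : ℂ) • f ((2⁻¹ : ℂ) • (μ • (((3 : ℂ) ^ n) • x)
            + μ • (((3 : ℂ) ^ n) • y)))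
            - μ • f (((3 : ℂ) ^ n) • x) - μ • f (((3 : ℂ) ^ n) • y)
            + f (star (((3 : ℂ) ^ n) • z)) - star (f (((3 : ℂ) ^ n) • z))‖
        ≤ ((3:ℝ) ^ n)⁻¹ * (θ * (‖((3 : ℂ) ^ n) • x‖ ^ p + ‖((3 : ℂ) ^ n) • y‖ ^ p
            + ‖((3 : ℂ) ^ n) • z‖ ^ p)) := by
          apply mul_le_mul_of_nonneg_left hb (by positivity)
      _ = θ * (‖x‖ ^ p + ‖y‖ ^ p + ‖z‖ ^ p) * ((3:ℝ) ^ p / 3) ^ n := by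
          rw [h3p, h3p, h3p, div_pow]
          ring
  -- the limit equation
  have heq : ∀ μ : ℂ, ‖μ‖ = 1 → ∀ x y z : A,
      (2 : ℂ) • L ((2⁻¹ : ℂ) • (μ • x + μ • y)) - μ • L x - μ • L y
        + L (star z) - star (L z) = 0 := by
    intro μ hμ x y z
    refine tendsto_nhds_unique ?_ (hzero μ hμ x y z)
    exact (((((hgL _).const_smul (2:ℂ)).sub ((hgL x).const_smul μ)).sub
      ((hgL y).const_smul μ)).add (hgL (star z))).sub (hgL z).star
  have hL0 : L 0 = 0 := by
    rw [hL]
    simp [hf0]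
  have hJ : ∀ x y : A, (2 : ℂ) • L ((2⁻¹ : ℂ) • (x + y)) = L x + L y := by
    intro x y
    have h := heq 1 (by simp) x y 0
    simp only [one_smul, star_zero, hL0, add_zero, sub_zero] at h
    rwa [sub_sub, sub_eq_zero] at h
  have hhalfL : ∀ x : A, (2 : ℂ) • L ((2⁻¹ : ℂ) • x) = L x := by
    intro x
    have h := hJ x 0
    rwa [add_zero, hL0, add_zero] at h
  have hadd : ∀ x y : A, L (x + y) = L x + L y := by
    intro x y
    rw [← hJ x y, hhalfL]
  have hstarL : ∀ z : A, L (star z) = star (L z) := by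
    intro z
    have h := heq 1 (by simp) 0 0 z
    simp only [one_smul, add_zero, smul_zero, hL0, sub_zero, zero_add] at h
    rwa [sub_eq_zero] at h
  have hmu : ∀ μ : ℂ, ‖μ‖ = 1 → ∀ x : A, L (μ • x) = μ • L x := by
    intro μ hμ x
    have h := heq μ hμ x x 0
    have hw : (2⁻¹ : ℂ) • (μ • x + μ • x) = μ • x := by module
    rw [hw] at h
    simp only [star_zero, hL0, add_zero, sub_zero] at h
    rw [sub_sub, sub_eq_zero] at h
    have h2 : (2 : ℂ) • L (μ • x) = (2 : ℂ) • (μ • L x) := by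
      rw [h, two_smul]
    exact smul_right_injective B (by norm_num : (2:ℂ) ≠ 0) h2
  have hLmul : ∀ u : A, IsSelfAdjoint u → ‖u‖ = 1 → IsUnit u → ∀ y : A,
      L (u * y + y * u) = L u * f y + f y * L u := by
    intro u h1 h2 h3 y
    have hseq : G (u * y + y * u) = fun n => G u n * f y + f y * G u n := by
      funext n
      simp only [hG]
      rw [hmult' u h1 h2 h3 y n, smul_add, smul_mul_assoc, mul_smul_comm]
    refine tendsto_nhds_unique (hgL _) ?_
    rw [hseq]
    exact ((hgL u).mul_const _).add ((hgL u).const_mul _)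
  have hL1 : L 1 = T := tendsto_nhds_unique (hgL 1) hg1
  have hcomm : ∀ b : B, T * b = b * T := fun b => (Set.mem_center_iff.mp hTZ).comm b
  have hLT : ∀ y : A, L y = T * f y := by
    intro y
    have h := hLmul 1 (by simp : IsSelfAdjoint (1:A)) norm_one isUnit_one y
    rw [one_mul, mul_one, hL1, hadd, ← hcomm (f y)] at h
    have h2 : (2 : ℂ) • L y = (2 : ℂ) • (T * f y) := by
      rw [two_smul, two_smul]
      exact h
    exact smul_right_injective B (by norm_num : (2:ℂ) ≠ 0) h2
  have hTunit : star T * T = 1 := (Unitary.mem_iff.mp hTU).1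
  have hfL : ∀ y : A, f y = star T * L y := by
    intro y
    rw [hLT, ← mul_assoc, hTunit, one_mul]
  have hAdd : ∀ x y : A, f (x + y) = f x + f y := by
    intro x y
    rw [hfL (x + y), hfL x, hfL y, hadd, mul_add]
  have hTsa : star T = T := by
    have h := hstarL 1
    rw [star_one, hL1] at h
    exact h.symm
  have hTT : T * T = 1 := by
    nth_rewrite 1 [← hTsa]
    exact hTunit
  have hLcont : Continuous L := by
    rw [hL]
    exact (continuous_const.mul (hfc.comp (continuous_const_smul _))).add
      ((hfc.comp (continuous_const_smul _)).mul continuous_const)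
  have hreal : ∀ (r : ℝ) (x : A), L (r • x) = r • L x := by
    intro r x
    exact map_real_smul (AddMonoidHom.mk' L hadd) hLcont r x
  have hC : ∀ (cc : ℂ) (x : A), L (cc • x) = cc • L x := by
    intro cc x
    have e1 : L ((cc.re : ℂ) • x) = (cc.re : ℂ) • L x := by
      rw [Complex.coe_smul, hreal, ← Complex.coe_smul]
    have e2 : L ((cc.im : ℂ) • (Complex.I • x)) = (cc.im : ℂ) • L (Complex.I • x) := by
      rw [Complex.coe_smul, hreal, ← Complex.coe_smul]
    rw [aux_complex_smul_decomp cc x, hadd, e1, e2, hmu Complex.I (by simp) x,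
      ← aux_complex_smul_decomp cc (L x)]
  have hChom : ∀ (cc : ℂ) (x : A), f (cc • x) = cc • f x := by
    intro cc x
    rw [hfL (cc • x), hfL x, hC, mul_smul_comm]
  have hStar : ∀ x : A, f (star x) = star (f x) := by
    intro x
    have : f (star x) = star T * star (T * f x) := by
      rw [hfL (star x), hstarL, hLT]
    rw [this, star_mul, hTsa, ← hcomm (star (f x)), ← mul_assoc, hTT, one_mul]
  have hJu : ∀ u : A, IsSelfAdjoint u → ‖u‖ = 1 → IsUnit u → ∀ y : A,
      f (u * y + y * u) = f u * f y + f y * f u := by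
    intro u h1 h2 h3 y
    have h := hLmul u h1 h2 h3 y
    rw [hLT (u * y + y * u), hLT u] at h
    have h2' : T * f (u * y + y * u) = T * (f u * f y + f y * f u) := by
      rw [h, mul_add, mul_assoc, ← mul_assoc (f y), ← hcomm (f y), mul_assoc]
    have h3' := congrArg (fun b => star T * b) h2'
    rwa [← mul_assoc, ← mul_assoc, hTunit, one_mul, one_mul] at h3'
  have hJv : ∀ v : A, IsSelfAdjoint v → IsUnit v → ∀ y : A,
      f (v * y + y * v) = f v * f y + f y * f v := by
    intro v h1 h2 y
    have hvne : v ≠ 0 := h2.ne_zero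
    have hvpos : (0:ℝ) < ‖v‖ := norm_pos_iff.mpr hvne
    set u : A := ((‖v‖⁻¹ : ℝ) : ℂ) • v with hu
    have hu1 : IsSelfAdjoint u := by
      rw [hu]
      show star (((‖v‖⁻¹ : ℝ) : ℂ) • v) = ((‖v‖⁻¹ : ℝ) : ℂ) • v
      rw [star_smul, h1.star_eq]
      congr 1
      simp [Complex.star_def, Complex.conj_ofReal]
    have hu2 : ‖u‖ = 1 := by
      rw [hu, norm_smul]
      simp only [Complex.norm_real, Real.norm_eq_abs]
      rw [abs_of_pos (by positivity), inv_mul_cancel₀ hvpos.ne']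
    have hu3 : IsUnit u := by
      rw [hu, Algebra.smul_def]
      refine IsUnit.mul ?_ h2
      refine IsUnit.map (algebraMap ℂ A) ?_
      exact Ne.isUnit (by simp [hvpos.ne'])
    have hv : v = ((‖v‖ : ℝ) : ℂ) • u := by
      rw [hu, smul_smul, ← Complex.ofReal_mul, mul_inv_cancel₀ hvpos.ne',
        Complex.ofReal_one, one_smul]
    have key := hJu u hu1 hu2 hu3 y
    calc f (v * y + y * v)
        = f ((((‖v‖ : ℝ) : ℂ) • u) * y + y * (((‖v‖ : ℝ) : ℂ) • u)) := by rw [← hv]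
      _ = f (((‖v‖ : ℝ) : ℂ) • (u * y + y * u)) := by
          rw [smul_mul_assoc, mul_smul_comm, ← smul_add]
      _ = ((‖v‖ : ℝ) : ℂ) • f (u * y + y * u) := hChom _ _
      _ = ((‖v‖ : ℝ) : ℂ) • (f u * f y + f y * f u) := by rw [key]
      _ = (((‖v‖ : ℝ) : ℂ) • f u) * f y + f y * (((‖v‖ : ℝ) : ℂ) • f u) := by
          rw [smul_add, smul_mul_assoc, mul_smul_comm]
      _ = f (((‖v‖ : ℝ) : ℂ) • u) * f y + f y * f (((‖v‖ : ℝ) : ℂ) • u) := by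
          rw [hChom (((‖v‖ : ℝ) : ℂ)) u]
      _ = f v * f y + f y * f v := by rw [← hv]
  have hJsa : ∀ x : A, IsSelfAdjoint x → ∀ y : A,
      f (x * y + y * x) = f x * f y + f y * f x := by
    intro x hx y
    have hxcl : x ∈ closure {w : A | IsSelfAdjoint w ∧ IsUnit w} := hrr0 hx
    have hcl : IsClosed {w : A | f (w * y + y * w) = f w * f y + f y * f w} := by
      apply isClosed_eq
      · exact hfc.comp ((continuous_id.mul continuous_const).add
          (continuous_const.mul continuous_id))
      · exact (hfc.mul continuous_const).add (continuous_const.mul hfc)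
    exact closure_minimal (fun w hw => hJv w hw.1 hw.2 y) hcl hxcl
  have hJordan : ∀ x y : A, f (x * y + y * x) = f x * f y + f y * f x := by
    intro x y
    set a : A := (2⁻¹ : ℂ) • (x + star x) with ha
    set b : A := ((2⁻¹ : ℂ) * (-Complex.I)) • (x - star x) with hb
    have hasa : IsSelfAdjoint a := by
      show star a = a
      rw [ha, star_smul, star_add, star_star]
      have hc2 : star (2⁻¹ : ℂ) = (2⁻¹ : ℂ) := by simp
      rw [hc2, add_comm]
    have hbsa : IsSelfAdjoint b := by
      show star b = b
      rw [hb, star_smul, star_sub, star_star]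
      have hc2 : star ((2⁻¹ : ℂ) * (-Complex.I)) = (2⁻¹ : ℂ) * Complex.I := by
        simp
      rw [hc2]
      module
    have hx_eq : x = a + Complex.I • b := by
      rw [ha, hb, smul_smul]
      have hI : Complex.I * ((2⁻¹ : ℂ) * (-Complex.I)) = (2⁻¹ : ℂ) := by
        rw [show Complex.I * ((2⁻¹ : ℂ) * (-Complex.I))
            = -(Complex.I * Complex.I) * 2⁻¹ from by ring, Complex.I_mul_I]
        norm_num
      rw [hI]
      module
    have h1 := hJsa a hasa y
    have h2 := hJsa b hbsa y
    calc f (x * y + y * x)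
        = f ((a + Complex.I • b) * y + y * (a + Complex.I • b)) := by rw [← hx_eq]
      _ = f ((a * y + y * a) + Complex.I • (b * y + y * b)) := by
          congr 1
          simp only [add_mul, mul_add, smul_mul_assoc, mul_smul_comm, smul_add]
          abel
      _ = f (a * y + y * a) + Complex.I • f (b * y + y * b) := by
          rw [hAdd (a * y + y * a) (Complex.I • (b * y + y * b)),
            hChom Complex.I (b * y + y * b)]
      _ = (f a * f y + f y * f a) + Complex.I • (f b * f y + f y * f b) := by
          rw [h1, h2]
      _ = (f a + Complex.I • f b) * f y + f y * (f a + Complex.I • f b) := by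
          simp only [add_mul, mul_add, smul_mul_assoc, mul_smul_comm, smul_add]
          abel
      _ = f (a + Complex.I • b) * f y + f y * f (a + Complex.I • b) := by
          rw [hAdd a (Complex.I • b), hChom Complex.I b]
      _ = f x * f y + f y * f x := by rw [← hx_eq]
  exact ⟨hAdd, hChom, hJordan, hStar⟩
end

section
/- Let A be a unital C*-algebra of real rank zero, B a unital C*-algebra, and T : A → B a continuous ℂ-linear map such that T(uy + yu) = T(u)T(y) + T(y)T(u) for every u ∈ I₁(A_sa) and every y ∈ A. Then T(vy + yv) = T(v)T(y) + T(y)T(v) for every self-adjoint element v ∈ A with ‖v‖ = 1 and every y ∈ A. -/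
/-- Let `A` be a unital C*-algebra of real rank zero and `T : A → B`
a continuous ℂ-linear map satisfying the Jordan identity for every element of
`I₁(A_sa)`. Then `T` satisfies the Jordan identity for every self-adjoint element
of norm one. -/
theorem stmt8
    {A B : Type*}
    [NormedRing A] [StarRing A] [CStarRing A] [CompleteSpace A]
    [NormedAlgebra ℂ A] [StarModule ℂ A]
    [NormedRing B] [StarRing B] [CStarRing B] [CompleteSpace B]
    [NormedAlgebra ℂ B] [StarModule ℂ B]
    (hrr0 : {x : A | IsSelfAdjoint x} ⊆
      closure {x : A | IsSelfAdjoint x ∧ IsUnit x})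
    (T : A →ₗ[ℂ] B) (hTc : Continuous T)
    (hT : ∀ u : A, IsSelfAdjoint u → ‖u‖ = 1 → IsUnit u → ∀ y : A,
      T (u * y + y * u) = T u * T y + T y * T u) :
    ∀ v : A, IsSelfAdjoint v → ‖v‖ = 1 → ∀ y : A,
      T (v * y + y * v) = T v * T y + T y * T v := by
  intro v hv hv1 y
  obtain ⟨x, hx, hlim⟩ := mem_closure_iff_seq_limit.mp (hrr0 hv)
  have hnorm : Filter.Tendsto (fun n => ‖x n‖) Filter.atTop (nhds 1) := by
    simpa [hv1] using hlim.norm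
  have hpos : ∀ᶠ n in Filter.atTop, 0 < ‖x n‖ :=
    hnorm.eventually (eventually_gt_nhds one_pos)
  set c : ℕ → ℂ := fun n => ((‖x n‖ : ℂ))⁻¹ with hc
  set u : ℕ → A := fun n => c n • x n with hu_def
  have hctend : Filter.Tendsto c Filter.atTop (nhds 1) := by
    have : Filter.Tendsto (fun n => ((‖x n‖ : ℂ))) Filter.atTop (nhds ((1 : ℝ) : ℂ)) :=
      (Complex.continuous_ofReal.tendsto 1).comp hnorm
    simpa using this.inv₀ (by norm_num)
  have hu : Filter.Tendsto u Filter.atTop (nhds v) := by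
    simpa using hctend.smul hlim
  have key : ∀ᶠ n in Filter.atTop,
      T (u n * y + y * u n) = T (u n) * T y + T y * T (u n) := by
    filter_upwards [hpos] with n hn
    have hcne : c n ≠ 0 := by
      simp [hc, Complex.ofReal_ne_zero, hn.ne']
    refine hT (u n) ?_ ?_ ?_ y
    · refine IsSelfAdjoint.smul ?_ (hx n).1
      simp [hc, IsSelfAdjoint, ← Complex.ofReal_inv, Complex.conj_ofReal]
    · simp [hu_def, norm_smul, hc, abs_of_pos hn, inv_mul_cancel₀ hn.ne']
    · rw [hu_def]
      simp only [Algebra.smul_def]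
      exact ((hcne.isUnit).map (algebraMap ℂ A)).mul (hx n).2
  have h1 : Filter.Tendsto (fun n => T (u n * y + y * u n)) Filter.atTop
      (nhds (T (v * y + y * v))) :=
    (hTc.tendsto _).comp ((hu.mul tendsto_const_nhds).add (tendsto_const_nhds.mul hu))
  have h2 : Filter.Tendsto (fun n => T (u n) * T y + T y * T (u n)) Filter.atTop
      (nhds (T v * T y + T y * T v)) := by
    have hTu : Filter.Tendsto (fun n => T (u n)) Filter.atTop (nhds (T v)) :=
      (hTc.tendsto _).comp hu
    exact (hTu.mul tendsto_const_nhds).add (tendsto_const_nhds.mul hTu)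
  exact tendsto_nhds_unique (h1.congr' key) h2
end

section
/- Let X and Y be vector spaces over ℂ and let h : X → Y be a map satisfying h((x + y + z)/3) + h((x − 2y + z)/3) + h((x + y − 2z)/3) = h(x) for all x, y, z ∈ X. Then h is additive: h(a + b) = h(a) + h(b) for all a, b ∈ X. -/
/-- If `X`, `Y` are complex vector spaces and `h : X → Y` satisfies
`h((x+y+z)/3) + h((x−2y+z)/3) + h((x+y−2z)/3) = h(x)` for all `x, y, z`, then `h`
is additive. -/
theorem stmt10
    {X Y : Type*} [AddCommGroup X] [Module ℂ X] [AddCommGroup Y] [Module ℂ Y]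
    (h : X → Y)
    (hfe : ∀ x y z : X,
      h ((3⁻¹ : ℂ) • (x + y + z)) + h ((3⁻¹ : ℂ) • (x - (2 : ℂ) • y + z))
          + h ((3⁻¹ : ℂ) • (x + y - (2 : ℂ) • z)) = h x) :
    ∀ a b : X, h (a + b) = h a + h b := by
  have h0 : h 0 = 0 := by
    have h1 := hfe 0 0 0
    simp only [add_zero, smul_zero, sub_zero, zero_add] at h1
    have h2 : h 0 + h 0 = 0 := by
      have := congrArg (· - h 0) h1
      simpa using this
    have h3 : (2 : ℂ) • h 0 = 0 := by rw [two_smul]; exact h2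
    rcases smul_eq_zero.mp h3 with hc | hv
    · norm_num at hc
    · exact hv
  intro a b
  have key := hfe (a + b) (a - b) a
  have e1 : (3⁻¹ : ℂ) • (a + b + (a - b) + a) = a := by
    match_scalars <;> norm_num
  have e2 : (3⁻¹ : ℂ) • (a + b - (2 : ℂ) • (a - b) + a) = b := by
    match_scalars <;> norm_num
  have e3 : (3⁻¹ : ℂ) • (a + b + (a - b) - (2 : ℂ) • a) = 0 := by
    match_scalars <;> norm_num
  rw [e1, e2, e3, h0, add_zero] at key
  exact key.symm
end
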